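/- arXiv:0807.2544 — 2 statements merged into one kernel-verified Lean document; each statement's English description precedes it below -/
import Mathlib

section
/- Let N, n be natural numbers with n ≤ N and let δ ∈ (0, 1) be real. Then Σ_{A=0}^{N−n} (C(N−A, n)/C(N, n)) · C(N, A)·δ^A·(1−δ)^{N−A} = (1−δ)^n; that is, under the Binomial(N, δ) prior on A and hypergeometric sampling without replacement, the marginal probability that a sample of size n contains no attribute elements is P(a = 0) = (1−δ)^n. -/
open Finset

lemma key_choose (N n A : ℕ) (h : A ≤ N - n) (hn : n ≤ N) :
    (N - A).choose n * N.choose A = N.choose n * (N - n).choose A := by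
  have hA : n + A ≤ N := by omega
  have h1 := Nat.choose_mul (n := N) (k := n + A) (s := A) (Nat.le_add_left _ _)
  have h2 := Nat.choose_mul (n := N) (k := n + A) (s := n) (Nat.le_add_right _ _)
  rw [Nat.add_sub_cancel] at h1
  rw [Nat.add_sub_cancel_left] at h2
  have h3 : (n + A).choose A = (n + A).choose n := Nat.choose_symm_add.symm ▸ rfl
  rw [Nat.mul_comm, ← h1, h3, h2]

/-- Under the Binomial(N, δ) prior on `A` and hypergeometric sampling without
replacement, the marginal probability that a sample of size `n` contains no
attribute elements is `(1 − δ)^n`. -/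
theorem marginal_zero_count
    (N n : ℕ) (hn : n ≤ N) (δ : ℝ) (hδ0 : 0 < δ) (hδ1 : δ < 1) :
    ∑ A ∈ Finset.range (N - n + 1),
        (((N - A).choose n : ℝ) / (N.choose n : ℝ)) *
          ((N.choose A : ℝ) * δ ^ A * (1 - δ) ^ (N - A))
      = (1 - δ) ^ n := by
  have hcn : (0 : ℝ) < (N.choose n : ℝ) := by
    exact_mod_cast Nat.choose_pos hn
  have hstep : ∀ A ∈ Finset.range (N - n + 1),
      (((N - A).choose n : ℝ) / (N.choose n : ℝ)) *
          ((N.choose A : ℝ) * δ ^ A * (1 - δ) ^ (N - A))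
        = ((N - n).choose A : ℝ) * δ ^ A * (1 - δ) ^ (N - A) := by
    intro A hA
    rw [Finset.mem_range] at hA
    have hA' : A ≤ N - n := by omega
    have hk : ((N - A).choose n : ℝ) * (N.choose A : ℝ)
        = (N.choose n : ℝ) * ((N - n).choose A : ℝ) := by
      exact_mod_cast congrArg (Nat.cast : ℕ → ℝ) (key_choose N n A hA' hn)
    field_simp
    linear_combination ((1 - δ) ^ (N - A)) * hk
  rw [Finset.sum_congr rfl hstep]
  have hNA : ∀ A ∈ Finset.range (N - n + 1), N - A = (N - n - A) + n := by
    intro A hA; rw [Finset.mem_range] at hA; omega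
  calc ∑ A ∈ Finset.range (N - n + 1),
        ((N - n).choose A : ℝ) * δ ^ A * (1 - δ) ^ (N - A)
      = (1 - δ) ^ n * ∑ A ∈ Finset.range (N - n + 1),
          δ ^ A * (1 - δ) ^ (N - n - A) * ((N - n).choose A : ℝ) := by
        rw [Finset.mul_sum]
        refine Finset.sum_congr rfl fun A hA => ?_
        rw [hNA A hA, pow_add]; ring
    _ = (1 - δ) ^ n * (δ + (1 - δ)) ^ (N - n) := by rw [add_pow]
    _ = (1 - δ) ^ n := by norm_num
end

section
/- Let N, n, a, j be natural numbers with a ≤ n ≤ N and j ≤ N − n, and let δ ∈ (0, 1) be real. Under the Binomial(N, δ) prior on A and hypergeometric sampling without replacement, the posterior probability mass function of A given a satisfies Pr{A = a + j | a} = (C(A, a)·C(N−A, n−a)/C(N, n)) · C(N, A)·δ^A·(1−δ)^{N−A} / (C(n, a)·δ^a·(1−δ)^{n−a}) evaluated at A = a + j, and this equals the Binomial(N−n, δ) mass C(N−n, j)·δ^j·(1−δ)^{(N−n)−j}. -/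
open Finset

lemma choose_key (N n a j : ℕ) (han : a ≤ n) (hn : n ≤ N) (hj : j ≤ N - n) :
    N.choose (a + j) * ((a + j).choose a * (N - (a + j)).choose (n - a)) =
      N.choose n * n.choose a * (N - n).choose j := by
  have h1 : a + j ≤ N := by omega
  have h2 : N - (a + j) = N - a - j := by omega
  rw [h2, ← mul_assoc, Nat.choose_mul (Nat.le_add_right a j), Nat.add_sub_cancel_left, mul_assoc]
  -- now : N.choose a * (N-a).choose j * (N-a-j).choose (n-a)
  have h3 : j + (n - a) ≤ N - a := by omega
  have h4 : (N - a).choose j * (N - a - j).choose (n - a) =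
      (N - a).choose (n - a) * (N - n).choose j := by
    have e1 := Nat.choose_mul (n := N - a) (Nat.le_add_right j (n - a))
    rw [Nat.add_sub_cancel_left] at e1
    have e2 := Nat.choose_mul (n := N - a) (Nat.le_add_left (n - a) j)
    rw [Nat.add_sub_cancel] at e2
    have hsymm : (j + (n - a)).choose j = (j + (n - a)).choose (n - a) := by
      have h := Nat.choose_symm (Nat.le_add_right j (n - a))
      rw [Nat.add_sub_cancel_left] at h
      exact h.symm
    have h5 : N - a - (n - a) = N - n := by omega
    rw [← e1, hsymm, e2, h5]
  rw [h4, ← mul_assoc, ← Nat.choose_mul (n := N) han]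

/-- Under the Binomial(N, δ) prior on `A` and hypergeometric sampling, the posterior
mass of `A = a + j` given `a` is the Binomial(N−n, δ) mass at `j`. -/
theorem posterior_mass_binomial
    (N n a j : ℕ) (han : a ≤ n) (hn : n ≤ N) (hj : j ≤ N - n)
    (δ : ℝ) (hδ0 : 0 < δ) (hδ1 : δ < 1) :
    (((a + j).choose a : ℝ) * ((N - (a + j)).choose (n - a) : ℝ) / (N.choose n : ℝ)) *
        ((N.choose (a + j) : ℝ) * δ ^ (a + j) * (1 - δ) ^ (N - (a + j))) /
        ((n.choose a : ℝ) * δ ^ a * (1 - δ) ^ (n - a))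
      = ((N - n).choose j : ℝ) * δ ^ j * (1 - δ) ^ ((N - n) - j) := by
  have hδ : δ ≠ 0 := ne_of_gt hδ0
  have h1δ : (1 : ℝ) - δ ≠ 0 := by linarith
  have hNn : (N.choose n : ℝ) ≠ 0 := Nat.cast_ne_zero.mpr (Nat.choose_pos hn).ne'
  have hna : (n.choose a : ℝ) ≠ 0 := Nat.cast_ne_zero.mpr (Nat.choose_pos han).ne'
  have hpow1 : δ ^ (a + j) = δ ^ a * δ ^ j := pow_add δ a j
  have hpow2 : (1 - δ) ^ (N - (a + j)) = (1 - δ) ^ (n - a) * (1 - δ) ^ (N - n - j) := by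
    rw [← pow_add]
    congr 1
    omega
  have key : ((N.choose (a + j) : ℝ) * (((a + j).choose a : ℝ) * ((N - (a + j)).choose (n - a) : ℝ))) =
      (N.choose n : ℝ) * (n.choose a : ℝ) * ((N - n).choose j : ℝ) := by
    exact_mod_cast congrArg (Nat.cast : ℕ → ℝ) (choose_key N n a j han hn hj)
  rw [hpow1, hpow2]
  field_simp
  linear_combination key
end
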